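/- Uniqueness of groupoid cardinality: if μ is a real-valued function on tame groupoids that (i) is invariant under equivalence, (ii) takes value 1 on the one-object one-morphism groupoid, (iii) satisfies μ(G) = k·μ(H) for every k-sheeted covering G → H, (iv) is additive over binary disjoint unions, and (v) is continuous with respect to filtrations (μ(G) = lim μ(G^(n)) for any filtration G^(n) of G), then μ(G) = χ(G) for every tame groupoid G. -/

import Mathlib

open CategoryTheory

/-- Groupoid cardinality: sum over isomorphism classes of 1/#Aut. -/
noncomputable def chi (C : Type u) [Category.{v} C] : ℝ :=
  ∑' c : Quotient (isIsomorphicSetoid C), (1 : ℝ) / Nat.card (Aut (Quotient.out c))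

/-- Tame: countably many iso classes, finite automorphism groups, convergent sum. -/
def Tame (C : Type u) [Category.{v} C] : Prop :=
  Countable (Quotient (isIsomorphicSetoid C)) ∧ (∀ x : C, Finite (Aut x)) ∧
    Summable (fun c : Quotient (isIsomorphicSetoid C) =>
      (1 : ℝ) / Nat.card (Aut (Quotient.out c)))

/-- A `k`-sheeted covering of groupoids: surjective on objects, unique lifting of
morphisms given a lift of the source, and every fiber has exactly `k` objects. -/
def IsSheetedCovering {G : Type u} {H : Type u₂} [Groupoid.{v} G] [Groupoid.{v₂} H]
    (F : G ⥤ H) (k : ℕ) : Prop :=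
  Function.Surjective F.obj ∧
    (∀ (h₁ h₂ : H) (f : h₁ ⟶ h₂) (g₁ : G), F.obj g₁ = h₁ →
      ∃! p : Σ g₂ : G, g₁ ⟶ g₂, F.obj p.1 = h₂ ∧ HEq (F.map p.2) f) ∧
    (∀ h : H, Nat.card {g : G // F.obj g = h} = k)


instance fullSubcategoryGroupoid {C : Type u} [Groupoid.{v} C] (P : C → Prop) :
    Groupoid (ObjectProperty.FullSubcategory P) :=
  InducedCategory.groupoid C ObjectProperty.FullSubcategory.obj

instance sumGroupoid {C D : Type u} [Groupoid.{v} C] [Groupoid.{v} D] :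
    Groupoid (C ⊕ D) where
  inv {X Y} f :=
    match X, Y, f with
    | Sum.inl _, Sum.inl _, f => ULift.up (Groupoid.inv f.down)
    | Sum.inr _, Sum.inr _, f => ULift.up (Groupoid.inv f.down)
  inv_comp {X Y} f := by
    cases X <;> cases Y <;> first | exact f.elim | exact congrArg ULift.up (Groupoid.inv_comp f.down)
  comp_inv {X Y} f := by
    cases X <;> cases Y <;> first | exact f.elim | exact congrArg ULift.up (Groupoid.comp_inv f.down)

/-! ### Auxiliary material for the proof of `mu_eq_chi` -/

namespace MuChiAux

universe u v u' v'
variable {C : Type u} [Category.{v} C] {D : Type u'} [Category.{v'} D]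

/-- The summand of `chi`. -/
noncomputable def term (C : Type u) [Category.{v} C] (c : Quotient (isIsomorphicSetoid C)) : ℝ :=
  (1 : ℝ) / Nat.card (Aut (Quotient.out c))

lemma chi_eq_tsum_term : chi C = ∑' c, term C c := rfl

lemma summable_term_iff :
    (Summable fun c : Quotient (isIsomorphicSetoid C) =>
      (1 : ℝ) / Nat.card (Aut (Quotient.out c))) ↔ Summable (term C) := Iff.rfl

lemma tame_def : Tame C ↔ (Countable (Quotient (isIsomorphicSetoid C)) ∧
    (∀ x : C, Finite (Aut x)) ∧ Summable (term C)) := Iff.rfl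

lemma card_aut_congr {x y : C} (i : x ≅ y) : Nat.card (Aut x) = Nat.card (Aut y) :=
  Nat.card_congr (Aut.autMulEquivOfIso i).toEquiv

lemma iso_of_mk_eq {x y : C}
    (h : Quotient.mk (isIsomorphicSetoid C) x = Quotient.mk (isIsomorphicSetoid C) y) :
    Nonempty (x ≅ y) := Quotient.exact h

lemma iso_out (x : C) : Nonempty ((Quotient.mk (isIsomorphicSetoid C) x).out ≅ x) :=
  iso_of_mk_eq (Quotient.out_eq _)

lemma term_eq {x : C} {c : Quotient (isIsomorphicSetoid C)}
    (h : Quotient.mk (isIsomorphicSetoid C) x = c) :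
    term C c = (1 : ℝ) / Nat.card (Aut x) := by
  obtain ⟨i⟩ := iso_of_mk_eq (h.trans (Quotient.out_eq c).symm)
  rw [term, card_aut_congr i.symm]

/-- The induced map on isomorphism classes. -/
def clMap (F : C ⥤ D) : Quotient (isIsomorphicSetoid C) → Quotient (isIsomorphicSetoid D) :=
  Quotient.map F.obj fun _ _ ⟨i⟩ => ⟨F.mapIso i⟩

@[simp] lemma clMap_mk (F : C ⥤ D) (x : C) :
    clMap F (Quotient.mk _ x) = Quotient.mk _ (F.obj x) := rfl

/-- Equivalent categories have equivalent sets of isomorphism classes. -/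
def clEquiv (e : C ≌ D) : Quotient (isIsomorphicSetoid C) ≃ Quotient (isIsomorphicSetoid D) where
  toFun := clMap e.functor
  invFun := clMap e.inverse
  left_inv c := by
    induction c using Quotient.inductionOn with
    | h x => exact Quotient.sound ⟨(e.unitIso.app x).symm⟩
  right_inv c := by
    induction c using Quotient.inductionOn with
    | h y => exact Quotient.sound ⟨e.counitIso.app y⟩

lemma card_aut_ff {F : C ⥤ D} (hF : F.FullyFaithful) (x : C) :
    Nat.card (Aut (F.obj x)) = Nat.card (Aut x) :=
  (Nat.card_congr (hF.autMulEquivOfFullyFaithful x).toEquiv).symm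

lemma term_clEquiv (e : C ≌ D) (c : Quotient (isIsomorphicSetoid C)) :
    term D (clEquiv e c) = term C c := by
  induction c using Quotient.inductionOn with
  | h x =>
    rw [term_eq (c := clEquiv e (Quotient.mk _ x)) rfl, term_eq rfl,
      card_aut_ff e.fullyFaithfulFunctor]

lemma chi_congr (e : C ≌ D) : chi C = chi D := by
  rw [chi_eq_tsum_term, chi_eq_tsum_term, ← (clEquiv e).tsum_eq (term D)]
  exact tsum_congr fun c => (term_clEquiv e c).symm

lemma tame_congr (e : C ≌ D) (h : Tame C) : Tame D := by
  obtain ⟨h1, h2, h3⟩ := h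
  refine ⟨Countable.of_equiv _ (clEquiv e), fun y => ?_, ?_⟩
  · exact Finite.of_injective _ (e.fullyFaithfulInverse.autMulEquivOfFullyFaithful y).injective
  · rw [summable_term_iff] at h3 ⊢
    rw [← (clEquiv e).summable_iff]
    exact h3.congr fun c => (term_clEquiv e c).symm

lemma tame_of_finite_classes [Finite (Quotient (isIsomorphicSetoid C))]
    (h : ∀ x : C, Finite (Aut x)) : Tame C :=
  ⟨Finite.to_countable, h, Summable.of_finite⟩

lemma finite_aut_of_finite_hom {x : C} (_ : Finite (x ⟶ x)) : Finite (Aut x) :=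
  Finite.of_injective (fun φ : Aut x => φ.hom) fun _ _ h => Iso.ext h

/-! #### Full subcategories of groupoids -/

variable {G : Type u} [Groupoid.{v} G]

/-- A predicate closed under isomorphism. -/
def IsoClosed (P : G → Prop) : Prop := ∀ ⦃x y : G⦄, (x ≅ y) → P x → P y

lemma isoClosed_lift (g : Quotient (isIsomorphicSetoid G) → Prop) :
    IsoClosed (fun y : G => g (Quotient.mk (isIsomorphicSetoid G) y)) := by
  intro x y i h
  rwa [← Quotient.sound (⟨i⟩ : (isIsomorphicSetoid G).r x y)]

lemma isoClosed_not {P : G → Prop} (hP : IsoClosed P) : IsoClosed (fun x => ¬ P x) :=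
  fun x y i h hy => h (hP i.symm hy)

/-- Lift an isomorphism of underlying objects to the full subcategory. -/
def subIso {P : G → Prop} {x y : ObjectProperty.FullSubcategory P} (i : x.obj ≅ y.obj) : x ≅ y where
  hom := ObjectProperty.homMk i.hom
  inv := ObjectProperty.homMk i.inv
  hom_inv_id := ObjectProperty.hom_ext _ i.hom_inv_id
  inv_hom_id := ObjectProperty.hom_ext _ i.inv_hom_id

variable {P : G → Prop}

/-- Classes of a full subcategory on an iso-closed predicate are classes of the
ambient groupoid satisfying the predicate. -/
noncomputable def clSub (hP : IsoClosed P) :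
    Quotient (isIsomorphicSetoid (ObjectProperty.FullSubcategory P)) ≃
      {c : Quotient (isIsomorphicSetoid G) // P (Quotient.out c)} where
  toFun d := ⟨clMap (ObjectProperty.ι P) d, by
    induction d using Quotient.inductionOn with
    | h x =>
      obtain ⟨i⟩ := iso_out (C := G) x.obj
      exact hP i.symm x.property⟩
  invFun c := Quotient.mk _ ⟨(c : Quotient (isIsomorphicSetoid G)).out, c.property⟩
  left_inv d := by
    induction d using Quotient.inductionOn with
    | h x =>
      refine Quotient.sound ?_
      obtain ⟨i⟩ := iso_out (C := G) x.obj
      exact ⟨subIso i⟩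
  right_inv c := Subtype.ext (Quotient.out_eq _)

lemma clSub_val (hP : IsoClosed P) (d : Quotient (isIsomorphicSetoid (ObjectProperty.FullSubcategory P))) :
    (clSub hP d : Quotient (isIsomorphicSetoid G)) = clMap (ObjectProperty.ι P) d := rfl

lemma term_clSub (hP : IsoClosed P) (d : Quotient (isIsomorphicSetoid (ObjectProperty.FullSubcategory P))) :
    term G (clSub hP d : Quotient (isIsomorphicSetoid G)) = term (ObjectProperty.FullSubcategory P) d := by
  induction d using Quotient.inductionOn with
  | h x =>
    rw [clSub_val, clMap_mk]
    rw [term_eq (x := (ObjectProperty.ι P).obj x) rfl, term_eq (x := x) rfl,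
      card_aut_ff (ObjectProperty.fullyFaithfulι P) x]

lemma tame_sub (hG : Tame G) (hP : IsoClosed P) : Tame (ObjectProperty.FullSubcategory P) := by
  obtain ⟨h1, h2, h3⟩ := hG
  refine tame_def.2 ⟨?_, fun x => ?_, ?_⟩
  · exact Countable.of_equiv _ (clSub hP).symm
  · exact Finite.of_injective _
      ((ObjectProperty.fullyFaithfulι P).autMulEquivOfFullyFaithful x).injective
  · have h4 : Summable ((fun c : {c : Quotient (isIsomorphicSetoid G) // P (Quotient.out c)} =>
        term G c.1) ∘ (clSub hP)) :=
      ((clSub hP).summable_iff).2 ((summable_term_iff.1 h3).subtype _)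
    exact h4.congr fun d => term_clSub hP d

lemma chi_sub (hP : IsoClosed P) :
    chi (ObjectProperty.FullSubcategory P) =
      ∑' c : {c : Quotient (isIsomorphicSetoid G) // P (Quotient.out c)}, term G c.1 := by
  rw [chi_eq_tsum_term, ← Equiv.tsum_eq (clSub hP) (fun c => term G c.1)]
  exact tsum_congr fun d => (term_clSub hP d).symm

/-- For predicates lifted from the set of classes, classes of the full subcategory are
classes satisfying the predicate. -/
noncomputable def clSubLift (g : Quotient (isIsomorphicSetoid G) → Prop) :
    Quotient (isIsomorphicSetoid
        (ObjectProperty.FullSubcategory (fun y : G => g (Quotient.mk (isIsomorphicSetoid G) y)))) ≃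
      {c : Quotient (isIsomorphicSetoid G) // g c} :=
  (clSub (isoClosed_lift g)).trans (Equiv.subtypeEquivRight fun c => by rw [Quotient.out_eq])

lemma chi_sub_lift (g : Quotient (isIsomorphicSetoid G) → Prop) :
    chi (ObjectProperty.FullSubcategory (fun y : G => g (Quotient.mk (isIsomorphicSetoid G) y))) =
      ∑' c : {c : Quotient (isIsomorphicSetoid G) // g c}, term G c.1 := by
  rw [chi_sub (isoClosed_lift g),
    ← Equiv.tsum_eq (Equiv.subtypeEquivRight
      (p := fun c => g (Quotient.mk (isIsomorphicSetoid G) (Quotient.out c)))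
      (q := fun c => g c) (fun c => by
        show g (Quotient.mk (isIsomorphicSetoid G) (Quotient.out c)) ↔ g c
        rw [Quotient.out_eq]))]
  rfl

/-! #### The sum decomposition -/

variable (P) (Q : G → Prop) in
/-- The canonical functor from the disjoint union of two full subcategories. -/
def subSumFunctor : (ObjectProperty.FullSubcategory P ⊕ ObjectProperty.FullSubcategory Q) ⥤ G where
  obj := Sum.elim ObjectProperty.FullSubcategory.obj ObjectProperty.FullSubcategory.obj
  map {X Y} f :=
    match X, Y, f with
    | Sum.inl _, Sum.inl _, f => f.down.hom
    | Sum.inr _, Sum.inr _, f => f.down.hom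
  map_id X := by cases X <;> rfl
  map_comp {X Y Z} f g := by
    cases X <;> cases Y <;> cases Z <;> first | exact f.elim | exact g.elim | rfl

lemma subSumFunctor_isEquivalence (hP : IsoClosed P) :
    (subSumFunctor P (fun x => ¬ P x)).IsEquivalence := by
  have faithful : (subSumFunctor P (fun x => ¬ P x)).Faithful := by
    constructor
    intro X Y f g h
    match X, Y, f, g with
    | Sum.inl _, Sum.inl _, f, g => exact ULift.ext _ _ (ObjectProperty.hom_ext _ h)
    | Sum.inr _, Sum.inr _, f, g => exact ULift.ext _ _ (ObjectProperty.hom_ext _ h)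
  have full : (subSumFunctor P (fun x => ¬ P x)).Full := by
    constructor
    intro X Y f
    match X, Y with
    | Sum.inl x, Sum.inl y => exact ⟨ULift.up (ObjectProperty.homMk f), rfl⟩
    | Sum.inr x, Sum.inr y => exact ⟨ULift.up (ObjectProperty.homMk f), rfl⟩
    | Sum.inl x, Sum.inr y =>
      exact absurd (hP (Groupoid.isoEquivHom _ _ |>.symm f) x.property) y.property
    | Sum.inr x, Sum.inl y =>
      exact absurd (hP (Groupoid.isoEquivHom _ _ |>.symm f).symm y.property) x.property
  have ess : (subSumFunctor P (fun x => ¬ P x)).EssSurj := by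
    constructor
    intro x
    by_cases h : P x
    · exact ⟨Sum.inl ⟨x, h⟩, ⟨Iso.refl x⟩⟩
    · exact ⟨Sum.inr ⟨x, h⟩, ⟨Iso.refl x⟩⟩
  exact { }

/-- The decomposition of a groupoid along an iso-closed predicate. -/
noncomputable def subSumEquiv (hP : IsoClosed P) :
    (ObjectProperty.FullSubcategory P ⊕ ObjectProperty.FullSubcategory (fun x => ¬ P x)) ≌ G :=
  haveI := subSumFunctor_isEquivalence hP
  (subSumFunctor P (fun x => ¬ P x)).asEquivalence

/-! #### The codiscrete groupoid covering `SingleObj Γ` -/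

/-- The codiscrete groupoid on the underlying set of a group `Γ`. -/
def Cod (Γ : Type) := Γ

variable {Γ : Type} [Group Γ]

instance : Group (Cod Γ) := inferInstanceAs (Group Γ)

instance : Groupoid (Cod Γ) where
  Hom x y := {g : Cod Γ // g * x = y}
  id x := ⟨1, one_mul x⟩
  comp {x y z} f g := ⟨g.1 * f.1, by rw [mul_assoc, f.2, g.2]⟩
  id_comp f := Subtype.ext (mul_one _)
  comp_id f := Subtype.ext (one_mul _)
  assoc f g h := Subtype.ext (mul_assoc _ _ _).symm
  inv {x y} f := ⟨f.1⁻¹, inv_mul_eq_iff_eq_mul.2 f.2.symm⟩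
  inv_comp f := Subtype.ext (mul_inv_cancel _)
  comp_inv f := Subtype.ext (inv_mul_cancel _)

instance codHomSubsingleton {x y : Cod Γ} : Subsingleton (x ⟶ y) := by
  constructor
  rintro ⟨g₁, h₁⟩ ⟨g₂, h₂⟩
  exact Subtype.ext (mul_left_injective x (h₁.trans h₂.symm))

/-- The covering functor from the codiscrete groupoid to `SingleObj Γ`. -/
def codCover : Cod Γ ⥤ SingleObj Γ where
  obj _ := SingleObj.star Γ
  map f := show Γ from f.1
  map_id _ := rfl
  map_comp _ _ := rfl

lemma codCover_isSheetedCovering : IsSheetedCovering (codCover (Γ := Γ)) (Nat.card Γ) := by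
  refine ⟨fun h => ⟨(1 : Γ), Subsingleton.elim _ _⟩, ?_, ?_⟩
  · intro h₁ h₂ f x hx
    refine ⟨⟨(show Cod Γ from f) * x, ⟨(show Cod Γ from f), rfl⟩⟩,
      ⟨Subsingleton.elim _ _, HEq.rfl⟩, ?_⟩
    rintro ⟨y, φ⟩ ⟨-, hφ⟩
    have h1 : (φ.1 : Cod Γ) = (show Cod Γ from f) := eq_of_heq hφ
    obtain rfl : y = (show Cod Γ from f) * x := by rw [← φ.2, h1]
    exact congrArg (Sigma.mk ((show Cod Γ from f) * x)) (Subsingleton.elim φ _)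
  · intro h
    rw [Nat.card_congr (Equiv.subtypeUnivEquiv fun g => Subsingleton.elim _ _)]
    rfl

/-- The codiscrete groupoid on a group is equivalent to the point. -/
noncomputable def codEquivPUnit : Cod Γ ≌ Discrete PUnit := by
  have J : Cod Γ ⥤ Discrete PUnit :=
    { obj := fun _ => ⟨PUnit.unit⟩
      map := fun _ => 𝟙 _
      map_id := fun _ => rfl
      map_comp := fun _ _ => (Category.comp_id _).symm }
  haveI : J.Faithful := ⟨fun {X Y} f g _ => Subsingleton.elim f g⟩
  haveI : J.Full := ⟨fun {X Y} f => ⟨⟨Y * X⁻¹, by group⟩, Subsingleton.elim _ _⟩⟩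
  haveI : J.EssSurj := ⟨fun Y => ⟨(1 : Γ), ⟨eqToIso (by cases Y with | mk a => cases a; rfl)⟩⟩⟩
  haveI : J.IsEquivalence := {}
  exact J.asEquivalence

/-! #### A single isomorphism class -/

/-- The functor from the single-object groupoid on `Aut x` to the full subcategory
of objects in the class of `x`. -/
noncomputable def singleObjToSub (c : Quotient (isIsomorphicSetoid G)) :
    SingleObj (Aut (Quotient.out c)) ⥤
      ObjectProperty.FullSubcategory (fun y : G => Quotient.mk (isIsomorphicSetoid G) y = c) where
  obj _ := ⟨Quotient.out c, Quotient.out_eq c⟩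
  map φ := ObjectProperty.homMk φ.hom
  map_id _ := rfl
  map_comp _ _ := rfl

lemma singleObjToSub_isEquivalence (c : Quotient (isIsomorphicSetoid G)) :
    (singleObjToSub c).IsEquivalence := by
  have faithful : (singleObjToSub c).Faithful := ⟨fun {X Y} f g h => Iso.ext (congrArg InducedCategory.Hom.hom h)⟩
  have full : (singleObjToSub c).Full := by
    constructor
    intro X Y f
    exact ⟨(Groupoid.isoEquivHom (Quotient.out c) (Quotient.out c)).symm f.hom, rfl⟩
  have ess : (singleObjToSub c).EssSurj := by
    constructor
    intro y
    obtain ⟨i⟩ := iso_of_mk_eq ((Quotient.out_eq c).trans y.property.symm)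
    exact ⟨SingleObj.star _, ⟨subIso i⟩⟩
  exact { }

end MuChiAux

namespace MuChiAux

lemma tame_pt : Tame (Discrete PUnit) := by
  haveI : Finite (Discrete PUnit) :=
    Finite.of_surjective (fun _ : PUnit => (⟨PUnit.unit⟩ : Discrete PUnit))
      (fun y => ⟨PUnit.unit, by cases y with | mk a => cases a; rfl⟩)
  refine tame_of_finite_classes fun x => ?_
  exact finite_aut_of_finite_hom (Finite.of_subsingleton)

lemma tame_of_isEmpty (K : Type u) [Groupoid.{v} K] (h : IsEmpty K) : Tame K := by
  haveI : IsEmpty (Quotient (isIsomorphicSetoid K)) := ⟨fun c => h.false (Quotient.out c)⟩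
  exact tame_of_finite_classes fun x => h.elim x

lemma chi_of_isEmpty (K : Type u) [Groupoid.{v} K] (h : IsEmpty K) : chi K = 0 := by
  haveI : IsEmpty (Quotient (isIsomorphicSetoid K)) := ⟨fun c => h.false (Quotient.out c)⟩
  exact tsum_empty

variable {Γ : Type} [Group Γ] [Finite Γ]

lemma tame_cod : Tame (Cod Γ) := by
  haveI : Finite (Cod Γ) := inferInstanceAs (Finite Γ)
  exact tame_of_finite_classes fun x => finite_aut_of_finite_hom Finite.of_subsingleton

lemma tame_singleObj : Tame (SingleObj Γ) := by
  haveI : Finite (SingleObj Γ) := inferInstanceAs (Finite Unit)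
  refine tame_of_finite_classes fun x => ?_
  exact finite_aut_of_finite_hom (inferInstanceAs (Finite Γ))

end MuChiAux

open MuChiAux in
open Filter Topology in
set_option maxHeartbeats 1000000 in
/-- Uniqueness of groupoid cardinality: a real-valued function on tame groupoids that is
invariant under equivalence, normalized on the point, compatible with `k`-sheeted
coverings, additive over binary disjoint unions, and continuous with respect to
filtrations, coincides with the groupoid cardinality `χ`. -/
theorem mu_eq_chi (μ : (G : Type) → [Groupoid.{0} G] → ℝ)
    (h_equiv : ∀ (G : Type) [Groupoid.{0} G] (H : Type) [Groupoid.{0} H],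
      Tame G → Tame H → (G ≌ H) → μ G = μ H)
    (h_pt : μ (Discrete PUnit) = 1)
    (h_cov : ∀ (G : Type) [Groupoid.{0} G] (H : Type) [Groupoid.{0} H]
      (F : G ⥤ H) (k : ℕ), Tame G → Tame H → IsSheetedCovering F k → μ G = k * μ H)
    (h_add : ∀ (G : Type) [Groupoid.{0} G] (H : Type) [Groupoid.{0} H],
      Tame G → Tame H → μ (G ⊕ H) = μ G + μ H)
    (h_filt : ∀ (G : Type) [Groupoid.{0} G], Tame G →
      ∀ f : Quotient (isIsomorphicSetoid G) → ℕ, Function.Surjective f →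
        Tendsto (fun n : ℕ =>
            μ (ObjectProperty.FullSubcategory fun x : G => f (Quotient.mk (isIsomorphicSetoid G) x) ≤ n))
          atTop (𝓝 (μ G)))
    (G : Type) [Groupoid.{0} G] (hG : Tame G) : μ G = chi G := by
  classical
  have t_pt := tame_pt
  -- Step 1: μ vanishes on empty groupoids.
  have mu_empty : ∀ (K : Type) [Groupoid.{0} K], IsEmpty K → μ K = 0 := by
    intro K _ hK
    have tK := tame_of_isEmpty K hK
    haveI : (Sum.inl_ (Discrete PUnit.{1}) K).Faithful := ⟨fun {X Y} f g h => congrArg ULift.down h⟩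
    haveI : (Sum.inl_ (Discrete PUnit.{1}) K).Full := ⟨fun {X Y} f => ⟨f.down, rfl⟩⟩
    haveI : (Sum.inl_ (Discrete PUnit.{1}) K).EssSurj := ⟨fun Y => by
      match Y with
      | Sum.inl a => exact ⟨a, ⟨Iso.refl _⟩⟩
      | Sum.inr x => exact hK.elim x⟩
    haveI : (Sum.inl_ (Discrete PUnit.{1}) K).IsEquivalence := {}
    have e := (Sum.inl_ (Discrete PUnit.{1}) K).asEquivalence
    have tSum : Tame (Discrete PUnit ⊕ K) := tame_congr e t_pt
    have h1 := h_add (Discrete PUnit) K t_pt tK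
    have h2 := h_equiv (Discrete PUnit ⊕ K) (Discrete PUnit) tSum t_pt e.symm
    rw [h_pt] at h1 h2
    linarith
  -- Step 2: μ on a one-object groupoid.
  have mu_single : ∀ (Γ : Type) [Group Γ] [Finite Γ],
      μ (SingleObj Γ) = 1 / (Nat.card Γ : ℝ) := by
    intro Γ _ _
    have t_cod := tame_cod (Γ := Γ)
    have t_s := tame_singleObj (Γ := Γ)
    have h1 := h_equiv (Cod Γ) (Discrete PUnit) t_cod t_pt codEquivPUnit
    have h2 := h_cov (Cod Γ) (SingleObj Γ) codCover (Nat.card Γ) t_cod t_s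
      codCover_isSheetedCovering
    have hk : (0:ℝ) < (Nat.card Γ : ℝ) := by
      have : 0 < Nat.card Γ := Nat.card_pos
      exact_mod_cast this
    rw [eq_div_iff hk.ne', mul_comm, ← h2, h1, h_pt]
  -- Step 3: μ on a single isomorphism class.
  have mu_class : ∀ (K : Type) [Groupoid.{0} K], Tame K →
      ∀ c : Quotient (isIsomorphicSetoid K),
      μ (ObjectProperty.FullSubcategory (fun y : K => Quotient.mk (isIsomorphicSetoid K) y = c)) =
        term K c := by
    intro K _ hK c
    haveI : Finite (Aut (Quotient.out c)) := hK.2.1 _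
    have t_sub : Tame (ObjectProperty.FullSubcategory (fun y : K => Quotient.mk (isIsomorphicSetoid K) y = c)) :=
      tame_sub hK (isoClosed_lift (fun c' => c' = c))
    have t_s := tame_singleObj (Γ := Aut (Quotient.out c))
    haveI := singleObjToSub_isEquivalence (G := K) c
    have h1 := h_equiv _ _ t_s t_sub (singleObjToSub (G := K) c).asEquivalence
    rw [← h1, mu_single]
    rfl
  -- Step 4: groupoids with finitely many isomorphism classes, by induction.
  have key : ∀ (n : ℕ) (K : Type) [Groupoid.{0} K], Tame K →
      ∀ (_ : Finite (Quotient (isIsomorphicSetoid K))),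
      Nat.card (Quotient (isIsomorphicSetoid K)) = n → μ K = chi K := by
    intro n
    induction n with
    | zero =>
      intro K _ hK hfin hcard
      haveI := hfin
      haveI : IsEmpty (Quotient (isIsomorphicSetoid K)) := by
        rcases Nat.card_eq_zero.1 hcard with h | h
        · exact h
        · exact absurd hfin h.not_finite
      have hempty : IsEmpty K := ⟨fun x => IsEmpty.false (Quotient.mk (isIsomorphicSetoid K) x)⟩
      rw [mu_empty K hempty, chi_of_isEmpty K hempty]
    | succ n ih =>
      intro K _ hK hfin hcard
      haveI := hfin
      obtain ⟨⟨c⟩, -⟩ := Nat.card_pos_iff.1 (show 0 < Nat.card _ by rw [hcard]; exact n.succ_pos)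
      have hP : IsoClosed (fun y : K => Quotient.mk (isIsomorphicSetoid K) y = c) :=
        isoClosed_lift (fun c' => c' = c)
      have e := subSumEquiv hP
      have tP := tame_sub hK hP
      have tQ := tame_sub hK (isoClosed_not hP)
      have tSum := tame_congr e.symm hK
      have h1 := h_equiv _ K tSum hK e
      have h2 := h_add _ _ tP tQ
      haveI hfinQ : Finite (Quotient (isIsomorphicSetoid (ObjectProperty.FullSubcategory
          (fun x : K => ¬ Quotient.mk (isIsomorphicSetoid K) x = c)))) :=
        Finite.of_equiv _ (clSubLift (G := K) (fun c' => ¬ c' = c)).symm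
      have hcardQ : Nat.card (Quotient (isIsomorphicSetoid (ObjectProperty.FullSubcategory
          (fun x : K => ¬ Quotient.mk (isIsomorphicSetoid K) x = c)))) = n := by
        rw [Nat.card_congr (clSubLift (G := K) (fun c' => ¬ c' = c))]
        letI := Fintype.ofFinite (Quotient (isIsomorphicSetoid K))
        rw [Nat.card_eq_fintype_card] at hcard ⊢
        rw [Fintype.card_subtype_compl, Fintype.card_subtype_eq]
        omega
      have h3 := ih _ tQ hfinQ hcardQ
      have h4 := mu_class K hK c
      have h5 : chi K = term K c + chi (ObjectProperty.FullSubcategory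
          (fun x : K => ¬ Quotient.mk (isIsomorphicSetoid K) x = c)) := by
        letI := Fintype.ofFinite (Quotient (isIsomorphicSetoid K))
        rw [chi_eq_tsum_term, chi_sub_lift (G := K) (fun c' => ¬ c' = c),
          tsum_fintype, tsum_fintype]
        rw [← Finset.add_sum_erase _ _ (Finset.mem_univ c)]
        congr 1
        rw [Finset.sum_subtype (p := fun c' => ¬ c' = c) (Finset.univ.erase c)
          (fun x => by simp [Finset.mem_erase]) (fun c' => term K c')]
      rw [← h1, h2, h4, h3, h5]
  -- Step 5: the general case via a filtration.
  haveI hcnt := hG.1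
  by_cases hfin : Finite (Quotient (isIsomorphicSetoid G))
  · exact key _ G hG hfin rfl
  · haveI : Infinite (Quotient (isIsomorphicSetoid G)) := not_finite_iff_infinite.mp hfin
    obtain ⟨e⟩ : Nonempty (Quotient (isIsomorphicSetoid G) ≃ ℕ) :=
      (nonempty_denumerable (Quotient (isIsomorphicSetoid G))).elim
        fun d => ⟨Denumerable.eqv _⟩
    have hfilt := h_filt G hG ⇑e e.surjective
    have hterm := summable_term_iff.1 hG.2.2
    have hg : Summable (fun k : ℕ => term G (e.symm k)) := (e.symm.summable_iff).2 hterm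
    have hchi : chi G = ∑' k : ℕ, term G (e.symm k) := (e.symm.tsum_eq (term G)).symm
    have hten : Tendsto (fun n : ℕ => ∑ i ∈ Finset.range (n+1), term G (e.symm i))
        atTop (𝓝 (chi G)) := by
      rw [hchi]
      exact (hg.hasSum.tendsto_sum_nat).comp (tendsto_add_atTop_nat 1)
    have heq : ∀ n : ℕ,
        μ (ObjectProperty.FullSubcategory fun x : G => e (Quotient.mk (isIsomorphicSetoid G) x) ≤ n) =
          ∑ i ∈ Finset.range (n+1), term G (e.symm i) := by
      intro n
      haveI hfinn : Finite {c : Quotient (isIsomorphicSetoid G) // e c ≤ n} :=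
        Finite.of_injective
          (fun x : {c // e c ≤ n} => (⟨e x.1, Nat.lt_succ_of_le x.2⟩ : Fin (n+1)))
          (fun x y h => Subtype.ext (e.injective (congrArg Fin.val h)))
      haveI hfinn2 : Finite (Quotient (isIsomorphicSetoid (ObjectProperty.FullSubcategory
          (fun x : G => e (Quotient.mk (isIsomorphicSetoid G) x) ≤ n)))) :=
        Finite.of_equiv _ (clSubLift (G := G) (fun c => e c ≤ n)).symm
      have tsub := tame_sub hG (isoClosed_lift (fun c => e c ≤ n))
      rw [key _ _ tsub hfinn2 rfl, chi_sub_lift (G := G) (fun c => e c ≤ n)]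
      letI := Fintype.ofFinite {c : _root_.Quotient (isIsomorphicSetoid G) // e c ≤ n}
      haveI : Finite {k : ℕ // k ≤ n} :=
        Finite.of_injective (fun x : {k : ℕ // k ≤ n} => (⟨x.1, Nat.lt_succ_of_le x.2⟩ : Fin (n+1)))
          (fun x y h => Subtype.ext (congrArg Fin.val h))
      letI := Fintype.ofFinite {k : ℕ // k ≤ n}
      rw [tsum_fintype]
      rw [Finset.sum_subtype (Finset.range (n+1))
        (fun k => Finset.mem_range_succ_iff) (fun k => term G (e.symm k))]
      exact Fintype.sum_equiv
        (e.subtypeEquiv (p := fun c => e c ≤ n) (q := fun k => k ≤ n) fun c => Iff.rfl)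
        (fun b => term G b.1) (fun a => term G (e.symm a.1)) (fun x => by simp)
    have hten2 : Tendsto (fun n : ℕ =>
        μ (ObjectProperty.FullSubcategory fun x : G => e (Quotient.mk (isIsomorphicSetoid G) x) ≤ n))
        atTop (𝓝 (chi G)) := by
      simp only [heq]
      exact hten
    exact tendsto_nhds_unique hfilt hten2
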